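/- Let r > 0 and α ∈ ℝ. Then for every z ∈ ℝ the quantity r² + z² − z √(r² + z²) is strictly positive, and the function Φ(z) = 2 r^{α−1} ( √(z² + r²) + z ) − r^{α} arctan(z/r) is differentiable with Φ'(z) = r^{3+α} / ( r² + z² − z √(r² + z²) )². -/

import Mathlib

lemma sqrt_gt_z (r z : ℝ) (hr : 0 < r) : z < Real.sqrt (r ^ 2 + z ^ 2) := by
  rcases le_or_gt z 0 with h | h
  · exact lt_of_le_of_lt h (Real.sqrt_pos.mpr (by positivity))
  · rw [show r ^ 2 + z ^ 2 = z ^ 2 + r ^ 2 by ring]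
    have : z = Real.sqrt (z ^ 2) := by rw [Real.sqrt_sq h.le]
    calc z = Real.sqrt (z ^ 2) := this
    _ < Real.sqrt (z ^ 2 + r ^ 2) := by
        apply Real.sqrt_lt_sqrt (by positivity); nlinarith

theorem weighted_gradient_antiderivative (r α : ℝ) (hr : 0 < r) :
    (∀ z : ℝ, 0 < r ^ 2 + z ^ 2 - z * Real.sqrt (r ^ 2 + z ^ 2)) ∧
    ∀ z : ℝ,
      HasDerivAt
        (fun z : ℝ =>
          2 * r ^ (α - 1) * (Real.sqrt (z ^ 2 + r ^ 2) + z) -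
            r ^ α * Real.arctan (z / r))
        (r ^ (3 + α) / (r ^ 2 + z ^ 2 - z * Real.sqrt (r ^ 2 + z ^ 2)) ^ 2) z := by
  have hpos : ∀ z : ℝ, 0 < r ^ 2 + z ^ 2 - z * Real.sqrt (r ^ 2 + z ^ 2) := by
    intro z
    set s := Real.sqrt (r ^ 2 + z ^ 2) with hs
    have hs2 : s ^ 2 = r ^ 2 + z ^ 2 := Real.sq_sqrt (by positivity)
    have hzs : z < s := sqrt_gt_z r z hr
    have hs0 : 0 < s := Real.sqrt_pos.mpr (by positivity)
    nlinarith
  refine ⟨hpos, fun z => ?_⟩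
  set s := Real.sqrt (r ^ 2 + z ^ 2) with hs
  have hs2 : s ^ 2 = r ^ 2 + z ^ 2 := Real.sq_sqrt (by positivity)
  have hzs : z < s := sqrt_gt_z r z hr
  have hs0 : 0 < s := Real.sqrt_pos.mpr (by positivity)
  have hne : z ^ 2 + r ^ 2 ≠ 0 := by positivity
  have hsq : HasDerivAt (fun z : ℝ => Real.sqrt (z ^ 2 + r ^ 2)) (2 * z / (2 * s)) z := by
    have h1 : HasDerivAt (fun z : ℝ => z ^ 2 + r ^ 2) (2 * z) z := by
      simpa using ((hasDerivAt_pow 2 z).add_const (r ^ 2))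
    have := h1.sqrt hne
    simpa [show z ^ 2 + r ^ 2 = r ^ 2 + z ^ 2 by ring, ← hs] using this
  have harct : HasDerivAt (fun z : ℝ => Real.arctan (z / r)) ((1 / r) / (1 + (z / r) ^ 2)) z := by
    have h1 : HasDerivAt (fun z : ℝ => z / r) (1 / r) z := (hasDerivAt_id z).div_const r
    simpa [div_eq_mul_inv, mul_comm] using h1.arctan
  have hΦ : HasDerivAt
      (fun z : ℝ => 2 * r ^ (α - 1) * (Real.sqrt (z ^ 2 + r ^ 2) + z) -
        r ^ α * Real.arctan (z / r))
      (2 * r ^ (α - 1) * (2 * z / (2 * s) + 1) - r ^ α * ((1 / r) / (1 + (z / r) ^ 2))) z :=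
    (((hsq.add (hasDerivAt_id z)).const_mul (2 * r ^ (α - 1))).sub (harct.const_mul (r ^ α)))
  convert hΦ using 1
  have hr0 : r ≠ 0 := hr.ne'
  have hA : r ^ α = r ^ (α - 1) * r := by
    have h := Real.rpow_add hr (α - 1) 1
    rw [show α - 1 + 1 = α by ring, Real.rpow_one] at h
    exact h
  have hB : r ^ (3 + α) = r ^ (α - 1) * r ^ (4 : ℕ) := by
    have h := Real.rpow_add hr (α - 1) 4
    rw [show α - 1 + 4 = 3 + α by ring] at h
    rw [h, show (4 : ℝ) = ((4 : ℕ) : ℝ) by norm_num, Real.rpow_natCast]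
  have hsz : s - z ≠ 0 := sub_ne_zero.mpr hzs.ne'
  have hden : r ^ 2 + z ^ 2 - z * s = s * (s - z) := by rw [← hs2]; ring
  have h1z : 1 + (z / r) ^ 2 = s ^ 2 / r ^ 2 := by
    rw [hs2]; field_simp
  have hr4 : r ^ (4 : ℕ) = (s ^ 2 - z ^ 2) ^ 2 := by rw [hs2]; ring
  have hr2 : r ^ 2 = s ^ 2 - z ^ 2 := by rw [hs2]; ring
  rw [hB, hA, hden, h1z, hr4]
  have key : r * (1 / r / (s ^ 2 / r ^ 2)) = (s ^ 2 - z ^ 2) / s ^ 2 := by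
    rw [hr2]; field_simp
  rw [mul_assoc (r ^ (α - 1)), key]
  field_simp
  ring
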